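/- The Horn matrix H is copositive. -/

import Mathlib

open Matrix

/-- The Horn matrix. -/
def hornMatrix : Matrix (Fin 5) (Fin 5) ℝ :=
  !![1, 1, -1, -1, 1;
     1, 1, 1, -1, -1;
     -1, 1, 1, 1, -1;
     -1, -1, 1, 1, 1;
     1, -1, -1, 1, 1]

/-- The Horn matrix is copositive. -/
theorem hornMatrix_copositive :
    ∀ x : Fin 5 → ℝ, (∀ i, 0 ≤ x i) → 0 ≤ x ⬝ᵥ hornMatrix.mulVec x := by
  intro x hx
  simp only [hornMatrix, dotProduct, mulVec, Fin.sum_univ_five]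
  norm_num [Matrix.vecHead, Matrix.vecTail, Matrix.cons_val_two, Matrix.cons_val_three,
    Matrix.cons_val_four]
  rcases le_total (x 2) (x 4) with h | h
  · nlinarith [sq_nonneg (x 0 + x 1 + x 2 - x 3 - x 4), mul_nonneg (hx 2) (hx 3),
      mul_nonneg (hx 0) (sub_nonneg.2 h)]
  · nlinarith [sq_nonneg (x 0 + x 1 - x 2 - x 3 + x 4), mul_nonneg (hx 3) (hx 4),
      mul_nonneg (hx 1) (sub_nonneg.2 h)]
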